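/- arXiv:1811.02316 — 6 statements merged into one kernel-verified Lean document; each statement's English description precedes it below -/
import Mathlib

section
/- Let y = (y_1, ..., y_n) be a real vector with positive empirical variance, let S_1, ..., S_K be a partition of the index set {1, ..., n} with |S_k| < n for all k, and let z be the K-fold cross-validated intercept-only predictor defined by z_i = (1/(n - |S_k|)) * Σ_{j ∉ S_k} y_j for all i ∈ S_k. Assume z has positive empirical variance. Then the Pearson correlation between y and z equals ρ(y, z) = − [ Σ_{k=1}^{K} ( Σ_{j ∈ S_k} (y_j − ȳ) )² / (n − |S_k|) ] / [ (n − 1) σ(y) σ(z) ], where ȳ = (1/n) Σ_{j=1}^n y_j, σ²(y) = (n−1)^{-1} Σ_{j=1}^n (y_j − ȳ)² and σ²(z) = (n−1)^{-1} Σ_{j=1}^n (z_j − z̄)² with z̄ = (1/n) Σ_{j=1}^n z_j. In particular ρ(y, z) is negative. -/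
open Finset

noncomputable def eMean {n : ℕ} (v : Fin n → ℝ) : ℝ := (∑ j, v j) / n

noncomputable def eVar {n : ℕ} (v : Fin n → ℝ) : ℝ :=
  (∑ j, (v j - eMean v) ^ 2) / ((n : ℝ) - 1)

noncomputable def eSD {n : ℕ} (v : Fin n → ℝ) : ℝ := Real.sqrt (eVar v)

noncomputable def eCorr {n : ℕ} (u v : Fin n → ℝ) : ℝ :=
  (∑ j, (u j - eMean u) * (v j - eMean v)) / (((n : ℝ) - 1) * eSD u * eSD v)

/-- For a partition `S` of `{1,…,n}` with `|S_k| < n`, and `z` the K-fold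
cross-validated intercept-only predictor, the Pearson correlation between `y` and `z`
equals the stated negative expression, and in particular is negative. -/
theorem stmt_0 {n K : ℕ} (y z : Fin n → ℝ) (S : Fin K → Finset (Fin n))
    (hpart : ∀ i : Fin n, ∃! k : Fin K, i ∈ S k)
    (hcard : ∀ k : Fin K, (S k).card < n)
    (hz : ∀ k : Fin K, ∀ i ∈ S k,
      z i = (∑ j ∈ (S k)ᶜ, y j) / ((n : ℝ) - (S k).card))
    (hy : 0 < eVar y) (hzv : 0 < eVar z) :
    eCorr y z =
      -(∑ k : Fin K, (∑ j ∈ S k, (y j - eMean y)) ^ 2 / ((n : ℝ) - (S k).card)) /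
        (((n : ℝ) - 1) * eSD y * eSD z) ∧
    eCorr y z < 0 := by
  classical
  have hn : 2 ≤ n := by
    by_contra h
    push_neg at h
    interval_cases n
    · simp [eVar] at hy
    · simp [eVar, eMean] at hy
  have hn1 : (1 : ℝ) < (n : ℝ) := by exact_mod_cast lt_of_lt_of_le one_lt_two (by exact_mod_cast hn)
  have hnpos : (0 : ℝ) < n := by linarith
  set m := eMean y with hm
  have hsum_y : ∑ j, y j = (n : ℝ) * m := by
    rw [hm]; unfold eMean; field_simp
  have hsum0 : ∑ j, (y j - m) = 0 := by
    rw [Finset.sum_sub_distrib, hsum_y, Finset.sum_const, Finset.card_univ,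
      Fintype.card_fin, nsmul_eq_mul, sub_self]
  have hck : ∀ k, ((S k).card : ℝ) < n := fun k => by exact_mod_cast hcard k
  have hkey : ∀ k, ∀ i ∈ S k,
      z i - m = -(∑ j ∈ S k, (y j - m)) / ((n : ℝ) - (S k).card) := by
    intro k i hi
    have hc := hck k
    have hne : ((n : ℝ) - (S k).card) ≠ 0 := by linarith
    have hsplit : ∑ j ∈ (S k)ᶜ, y j = (n : ℝ) * m - ∑ j ∈ S k, y j := by
      have h1 := Finset.sum_compl_add_sum (S k) y
      rw [hsum_y] at h1
      linarith
    have hTs : ∑ j ∈ S k, (y j - m) = (∑ j ∈ S k, y j) - ((S k).card : ℝ) * m := by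
      rw [Finset.sum_sub_distrib, Finset.sum_const, nsmul_eq_mul]
    rw [hz k i hi, hsplit, hTs]
    field_simp
    ring
  choose κ hκ hκu using hpart
  have hfil : ∀ k, univ.filter (fun i => κ i = k) = S k := by
    intro k
    ext i
    simp only [mem_filter, mem_univ, true_and]
    constructor
    · rintro rfl; exact hκ i
    · intro h; exact (hκu i k h).symm
  have hterm : ∀ k, ∑ i ∈ S k, (y i - m) * (z i - m)
      = -((∑ j ∈ S k, (y j - m)) ^ 2 / ((n : ℝ) - (S k).card)) := by
    intro k
    have hc := hck k
    have hne : ((n : ℝ) - (S k).card) ≠ 0 := by linarith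
    rw [Finset.sum_congr rfl (fun i hi => by rw [hkey k i hi]), ← Finset.sum_mul]
    field_simp
  have hnum : ∑ j, (y j - m) * (z j - eMean z)
      = -∑ k, (∑ j ∈ S k, (y j - m)) ^ 2 / ((n : ℝ) - (S k).card) := by
    have h1 : ∑ j, (y j - m) * (z j - eMean z) = ∑ j, (y j - m) * (z j - m) := by
      have h2 : ∑ j, (y j - m) * (z j - eMean z) - ∑ j, (y j - m) * (z j - m)
          = (m - eMean z) * ∑ j, (y j - m) := by
        rw [← Finset.sum_sub_distrib, Finset.mul_sum]
        exact Finset.sum_congr rfl fun j _ => by ring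
      rw [hsum0, mul_zero] at h2
      linarith
    calc ∑ j, (y j - m) * (z j - eMean z)
        = ∑ j, (y j - m) * (z j - m) := h1
      _ = ∑ k, ∑ i ∈ univ.filter (fun i => κ i = k), (y i - m) * (z i - m) :=
          (Finset.sum_fiberwise univ κ fun j => (y j - m) * (z j - m)).symm
      _ = ∑ k, ∑ i ∈ S k, (y i - m) * (z i - m) :=
          Finset.sum_congr rfl fun k _ => by rw [hfil k]
      _ = ∑ k, -((∑ j ∈ S k, (y j - m)) ^ 2 / ((n : ℝ) - (S k).card)) :=
          Finset.sum_congr rfl fun k _ => hterm k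
      _ = -∑ k, (∑ j ∈ S k, (y j - m)) ^ 2 / ((n : ℝ) - (S k).card) := by
          rw [Finset.sum_neg_distrib]
  have heq : eCorr y z =
      -(∑ k : Fin K, (∑ j ∈ S k, (y j - m)) ^ 2 / ((n : ℝ) - (S k).card)) /
        (((n : ℝ) - 1) * eSD y * eSD z) := by
    unfold eCorr
    rw [← hm, hnum]
  refine ⟨heq, ?_⟩
  have hDy : 0 < eSD y := Real.sqrt_pos.mpr hy
  have hDz : 0 < eSD z := Real.sqrt_pos.mpr hzv
  have hD : 0 < ((n : ℝ) - 1) * eSD y * eSD z :=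
    mul_pos (mul_pos (by linarith) hDy) hDz
  have hnonneg : ∀ k ∈ (univ : Finset (Fin K)),
      0 ≤ (∑ j ∈ S k, (y j - m)) ^ 2 / ((n : ℝ) - (S k).card) := fun k _ =>
    div_nonneg (sq_nonneg _) (by linarith [hck k])
  have hSpos : 0 < ∑ k, (∑ j ∈ S k, (y j - m)) ^ 2 / ((n : ℝ) - (S k).card) := by
    rcases lt_or_eq_of_le (Finset.sum_nonneg hnonneg) with h | h
    · exact h
    · exfalso
      have hzero : ∀ k, (∑ j ∈ S k, (y j - m)) = 0 := by
        intro k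
        have := (Finset.sum_eq_zero_iff_of_nonneg hnonneg).mp h.symm k (mem_univ k)
        have hne : ((n : ℝ) - (S k).card) ≠ 0 := by linarith [hck k]
        have := (div_eq_zero_iff.mp this).resolve_right hne
        exact pow_eq_zero_iff (by norm_num) |>.mp this
      have hzm : ∀ i, z i = m := by
        intro i
        have := hkey (κ i) i (hκ i)
        rw [hzero (κ i)] at this
        simp at this
        linarith
      have hmz : eMean z = m := by
        unfold eMean
        rw [Finset.sum_congr rfl fun i _ => hzm i, Finset.sum_const, Finset.card_univ,
          Fintype.card_fin, nsmul_eq_mul]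
        field_simp
      have : eVar z = 0 := by
        unfold eVar
        rw [Finset.sum_congr rfl fun i _ => by rw [hzm i, hmz, sub_self]]
        simp
      linarith
  rw [heq]
  exact div_neg_of_neg_of_pos (neg_neg_of_pos hSpos) hD
end

section
/- Let y = (y_1, ..., y_n) be a real vector with positive empirical variance, and let S_1, ..., S_K (with K ≥ 2) be a partition of {1, ..., n} into folds of equal size |S_k| = n/K. Let z be the K-fold cross-validated intercept-only predictor, z_i = (1/(n − |S_k|)) Σ_{j ∉ S_k} y_j for i ∈ S_k, and assume z has positive empirical variance. Then the Pearson correlation between y and z equals ρ(y, z) = − (K − 1) σ(z) / σ(y), where σ(y) and σ(z) denote the empirical standard deviations of y and z. -/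
open Finset

lemma aux_mean (M Kr T : ℝ) (hM : M ≠ 0) (hK : Kr - 1 ≠ 0) :
    M * ((Kr * T - T) / (M * (Kr - 1))) = T := by
  field_simp

lemma aux_dev (N T Tk M : ℝ) (hNM : N - M ≠ 0) (hN : N ≠ 0) :
    (T - Tk) / (N - M) - T / N = -(Tk - M * (T / N)) / (N - M) := by
  field_simp
  ring

lemma aux_key (M Kr Q : ℝ) (hM : M ≠ 0) (hK : Kr - 1 ≠ 0) :
    -Q / (M * (Kr - 1)) = -(Kr - 1) * (M / (M * (Kr - 1)) ^ 2 * Q) := by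
  field_simp

lemma aux_final (c N sy sz : ℝ) (hN : N ≠ 0) (hy : sy ≠ 0) (hz : sz ≠ 0) :
    -c * ((N) * sz ^ 2) / ((N) * sy * sz) = -(c * sz / sy) := by
  field_simp

/-- For a partition into `K ≥ 2` folds of equal size `n/K`, the correlation
between `y` and the cross-validated intercept-only predictor `z` is `-(K-1)·σ(z)/σ(y)`. -/
theorem stmt_1 {n K : ℕ} (hK : 2 ≤ K) (y z : Fin n → ℝ) (S : Fin K → Finset (Fin n))
    (hpart : ∀ i : Fin n, ∃! k : Fin K, i ∈ S k)
    (hsize : ∀ k : Fin K, (S k).card * K = n)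
    (hz : ∀ k : Fin K, ∀ i ∈ S k,
      z i = (∑ j ∈ (S k)ᶜ, y j) / ((n : ℝ) - (S k).card))
    (hy : 0 < eVar y) (hzv : 0 < eVar z) :
    eCorr y z = -(((K : ℝ) - 1) * eSD z / eSD y) := by
  classical
  -- n ≥ 2
  have hn2 : 2 ≤ n := by
    by_contra h
    push_neg at h
    interval_cases n <;> simp [eVar, eMean] at hzv
  -- fold function
  have hpart' : ∀ i : Fin n, ∃ k, i ∈ S k ∧ ∀ k', i ∈ S k' → k' = k := by
    intro i; obtain ⟨k, hk, hu⟩ := hpart i; exact ⟨k, hk, hu⟩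
  choose f hf hu using hpart'
  have hSk : ∀ k, S k = univ.filter (fun i => f i = k) := by
    intro k; ext i
    simp only [mem_filter, mem_univ, true_and]
    constructor
    · intro h; exact (hu i k h).symm
    · rintro rfl; exact hf i
  have hsplit : ∀ g : Fin n → ℝ, ∑ i, g i = ∑ k, ∑ i ∈ S k, g i := by
    intro g
    simp_rw [hSk]
    exact (Finset.sum_fiberwise univ f g).symm
  -- uniform fold size
  have hK0 : 0 < K := by omega
  set k0 : Fin K := ⟨0, hK0⟩
  set m : ℕ := (S k0).card with hmdef
  have hm : ∀ k, (S k).card = m := by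
    intro k
    have := (hsize k).trans (hsize k0).symm
    exact Nat.eq_of_mul_eq_mul_right hK0 this
  have hmK : m * K = n := hsize k0
  have hm1 : 1 ≤ m := by
    rcases Nat.eq_zero_or_pos m with h | h
    · rw [h, Nat.zero_mul] at hmK; omega
    · exact h
  -- real facts
  have hNM : (n : ℝ) - m = m * ((K : ℝ) - 1) := by
    have : (n : ℝ) = m * K := by exact_mod_cast hmK.symm
    rw [this]; ring
  have hMpos : (0 : ℝ) < m := by
    have : (1 : ℝ) ≤ m := by exact_mod_cast hm1
    linarith
  have hK1 : (1 : ℝ) < (K : ℝ) := by exact_mod_cast hK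
  have hNMpos : (0 : ℝ) < (n : ℝ) - m := by
    rw [hNM]; nlinarith
  have hNpos : (0 : ℝ) < n := by
    have : (2 : ℝ) ≤ n := by exact_mod_cast hn2
    linarith
  have hN1 : (0 : ℝ) < (n : ℝ) - 1 := by
    have : (2 : ℝ) ≤ n := by exact_mod_cast hn2
    linarith
  have hM0 : (m : ℝ) ≠ 0 := ne_of_gt hMpos
  have hK10 : (K : ℝ) - 1 ≠ 0 := by linarith
  set T : ℝ := ∑ j, y j with hT
  set Tk : Fin K → ℝ := fun k => ∑ j ∈ S k, y j with hTk
  have hsumTk : ∑ k, Tk k = T := (hsplit y).symm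
  have hzval : ∀ k, ∀ i ∈ S k, z i = (T - Tk k) / ((n : ℝ) - m) := by
    intro k i hi
    rw [hz k i hi, hm k]
    congr 1
    have := Finset.sum_compl_add_sum (S k) y
    have h2 : ∑ j ∈ (S k)ᶜ, y j + Tk k = T := this
    linarith
  -- mean of z
  have hzsum : ∑ i, z i = T := by
    rw [hsplit z]
    have h1 : ∀ k, ∑ i ∈ S k, z i = m * ((T - Tk k) / ((n : ℝ) - m)) := by
      intro k
      rw [Finset.sum_congr rfl (hzval k), Finset.sum_const, hm k, nsmul_eq_mul]
    rw [Finset.sum_congr rfl (fun k _ => h1 k), ← Finset.mul_sum, ← Finset.sum_div,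
      Finset.sum_sub_distrib, hsumTk, Finset.sum_const, Finset.card_univ,
      Fintype.card_fin, nsmul_eq_mul, hNM]
    exact aux_mean _ _ _ hM0 hK10
  have hzbar : eMean z = T / n := by rw [eMean, hzsum]
  have hybar : eMean y = T / n := rfl
  set D : Fin K → ℝ := fun k => Tk k - m * (T / n) with hD
  have hzdev : ∀ k, ∀ i ∈ S k, z i - eMean z = -(D k) / ((n : ℝ) - m) := by
    intro k i hi
    rw [hzval k i hi, hzbar]
    exact aux_dev _ _ _ _ (ne_of_gt hNMpos) (ne_of_gt hNpos)
  have hydevsum : ∀ k, ∑ i ∈ S k, (y i - eMean y) = D k := by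
    intro k
    rw [Finset.sum_sub_distrib, Finset.sum_const, hm k, nsmul_eq_mul, hybar]
  set Q : ℝ := ∑ k, (D k) ^ 2 with hQ
  have hzz : ∑ i, (z i - eMean z) ^ 2 = m / ((n:ℝ) - m) ^ 2 * Q := by
    rw [hsplit (fun i => (z i - eMean z) ^ 2)]
    have h1 : ∀ k, ∑ i ∈ S k, (z i - eMean z) ^ 2 = m * ((D k) ^ 2 / ((n:ℝ)-m)^2) := by
      intro k
      rw [Finset.sum_congr rfl (fun i hi => by rw [hzdev k i hi])]
      rw [Finset.sum_const, hm k, nsmul_eq_mul]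
      congr 1
      rw [div_pow, neg_sq]
    rw [Finset.sum_congr rfl (fun k _ => h1 k), ← Finset.mul_sum, ← Finset.sum_div, hQ]
    ring
  have hyz : ∑ i, (y i - eMean y) * (z i - eMean z) = -Q / ((n:ℝ) - m) := by
    rw [hsplit (fun i => (y i - eMean y) * (z i - eMean z))]
    have h1 : ∀ k, ∑ i ∈ S k, (y i - eMean y) * (z i - eMean z)
        = -((D k)^2) / ((n:ℝ) - m) := by
      intro k
      rw [Finset.sum_congr rfl (fun i hi => by rw [hzdev k i hi]),
        ← Finset.sum_mul, hydevsum k]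
      ring
    rw [Finset.sum_congr rfl (fun k _ => h1 k), ← Finset.sum_div, hQ]
    rw [Finset.sum_neg_distrib, neg_div]
  -- key identity
  have hkey : ∑ i, (y i - eMean y) * (z i - eMean z)
      = -(((K:ℝ) - 1)) * ∑ i, (z i - eMean z) ^ 2 := by
    rw [hyz, hzz, hNM]
    exact aux_key _ _ _ hM0 hK10
  -- final algebra
  have hzzvar : ∑ i, (z i - eMean z) ^ 2 = ((n:ℝ) - 1) * eVar z := by
    rw [eVar, mul_div_cancel₀]
    exact ne_of_gt hN1
  have hsz : eSD z > 0 := Real.sqrt_pos.mpr hzv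
  have hsy : eSD y > 0 := Real.sqrt_pos.mpr hy
  have hsz2 : eSD z ^ 2 = eVar z := Real.sq_sqrt hzv.le
  rw [eCorr, hkey, hzzvar, ← hsz2]
  exact aux_final _ _ _ _ (ne_of_gt hN1) (ne_of_gt hsy) (ne_of_gt hsz)
end

section
/- Let y = (y_1, ..., y_n) with n ≥ 3 be a real vector with positive empirical variance, and let z be the leave-one-out cross-validated intercept-only predictor, i.e. the partition of {1, ..., n} into the n singleton folds, so that z_i = (1/(n − 1)) Σ_{j ≠ i} y_j for every i. Then the Pearson correlation between y and z equals −1. -/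
open Finset

/-- For `n ≥ 3` and `y` with positive empirical variance, the leave-one-out
cross-validated intercept-only predictor `z` has Pearson correlation `-1` with `y`. -/
theorem stmt_2 {n : ℕ} (hn : 3 ≤ n) (y z : Fin n → ℝ)
    (hz : ∀ i : Fin n, z i = (∑ j ∈ Finset.univ.erase i, y j) / ((n : ℝ) - 1))
    (hy : 0 < eVar y) :
    eCorr y z = -1 := by
  have hn3 : (3 : ℝ) ≤ (n : ℝ) := by exact_mod_cast hn
  have hc : (0 : ℝ) < (n : ℝ) - 1 := by linarith
  have hc0 : ((n : ℝ) - 1) ≠ 0 := ne_of_gt hc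
  have hnpos : (0 : ℝ) < (n : ℝ) := by linarith
  have hn0 : (n : ℝ) ≠ 0 := ne_of_gt hnpos
  set S : ℝ := ∑ j, y j with hS
  have hz' : ∀ i, z i = (S - y i) / ((n : ℝ) - 1) := by
    intro i
    rw [hz i, Finset.sum_erase_eq_sub (Finset.mem_univ i)]
  have hcard : (Finset.univ : Finset (Fin n)).card = n := by simp
  have hmean : eMean z = eMean y := by
    unfold eMean
    congr 1
    have : ∑ i, z i = ∑ i : Fin n, (S - y i) / ((n : ℝ) - 1) := by
      exact Finset.sum_congr rfl fun i _ => hz' i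
    rw [this]
    rw [← Finset.sum_div, Finset.sum_sub_distrib, Finset.sum_const, hcard]
    field_simp
    ring
  have hdev : ∀ i, z i - eMean z = -(y i - eMean y) / ((n : ℝ) - 1) := by
    intro i
    rw [hmean, hz']
    unfold eMean
    field_simp
    ring
  have hnum : ∑ j, (y j - eMean y) * (z j - eMean z)
      = -(∑ j, (y j - eMean y) ^ 2) / ((n : ℝ) - 1) := by
    have h : ∀ j, (y j - eMean y) * (z j - eMean z) = -(y j - eMean y) ^ 2 / ((n : ℝ) - 1) := by
      intro j
      rw [hdev j]
      ring
    rw [Finset.sum_congr rfl fun j _ => h j, ← Finset.sum_div, Finset.sum_neg_distrib, neg_div]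
  have hvz : eVar z = eVar y / ((n : ℝ) - 1) ^ 2 := by
    unfold eVar
    have h : ∀ j, (z j - eMean z) ^ 2 = (y j - eMean y) ^ 2 / ((n : ℝ) - 1) ^ 2 := by
      intro j
      rw [hdev j, div_pow, neg_sq]
    rw [Finset.sum_congr rfl fun j _ => h j, ← Finset.sum_div, div_div, div_div, mul_comm]
  have hsdy_pos : 0 < eSD y := Real.sqrt_pos.mpr hy
  have hsdz : eSD z = eSD y / ((n : ℝ) - 1) := by
    unfold eSD
    rw [hvz, Real.sqrt_div hy.le, Real.sqrt_sq hc.le]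
  have hsum : ∑ j, (y j - eMean y) ^ 2 = ((n : ℝ) - 1) * eVar y := by
    unfold eVar
    field_simp
  have hsq : eSD y * eSD y = eVar y := Real.mul_self_sqrt hy.le
  unfold eCorr
  rw [hnum, hsum, hsdz]
  field_simp
  nlinarith [hy, hsq]
end

section
/- Let y = (y_1, ..., y_n) be a real vector, let S_1, ..., S_K be a partition of {1, ..., n} with |S_k| < n for all k, and let z be the K-fold cross-validated intercept-only predictor, z_i = (1/(n − |S_k|)) Σ_{j ∉ S_k} y_j for i ∈ S_k. Then the empirical covariance numerator satisfies Σ_{j=1}^n (y_j − ȳ)(z_j − z̄) = − Σ_{k=1}^{K} ( Σ_{j ∈ S_k} (y_j − ȳ) )² / (n − |S_k|). In particular Σ_{j=1}^n (y_j − ȳ)(z_j − z̄) ≤ 0, with equality if and only if for every fold k the sum Σ_{j ∈ S_k} (y_j − ȳ) is zero, i.e. the average of the observations in every fold equals the overall average ȳ. -/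
open Finset

/-- The covariance numerator between `y` and the K-fold cross-validated
intercept-only predictor `z` equals minus the sum over folds of squared centered fold sums
divided by `n - |S_k|`; it is `≤ 0`, with equality iff every fold sum of `y_j - ȳ` is zero. -/
theorem stmt_4 {n K : ℕ} (y z : Fin n → ℝ) (S : Fin K → Finset (Fin n))
    (hpart : ∀ i : Fin n, ∃! k : Fin K, i ∈ S k)
    (hcard : ∀ k : Fin K, (S k).card < n)
    (hz : ∀ k : Fin K, ∀ i ∈ S k,
      z i = (∑ j ∈ (S k)ᶜ, y j) / ((n : ℝ) - (S k).card)) :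
    (∑ j, (y j - eMean y) * (z j - eMean z)) =
      -(∑ k : Fin K, (∑ j ∈ S k, (y j - eMean y)) ^ 2 / ((n : ℝ) - (S k).card)) ∧
    (∑ j, (y j - eMean y) * (z j - eMean z)) ≤ 0 ∧
    ((∑ j, (y j - eMean y) * (z j - eMean z)) = 0 ↔
      ∀ k : Fin K, (∑ j ∈ S k, (y j - eMean y)) = 0) := by
  classical
  choose f hf hu using hpart
  have hmem : ∀ i k, i ∈ S k ↔ f i = k := fun i k =>
    ⟨fun h => (hu i k h).symm, fun h => h ▸ hf i⟩
  have hgroup : ∀ g : Fin n → ℝ, ∑ k, ∑ j ∈ S k, g j = ∑ j, g j := by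
    intro g
    have hS : ∀ k, S k = univ.filter (fun i => f i = k) := by
      intro k; ext i; simp [hmem]
    simp_rw [hS]
    exact Finset.sum_fiberwise _ _ _
  set ybar := eMean y with hybar
  have hsum0 : ∑ j, (y j - ybar) = 0 := by
    rcases Nat.eq_zero_or_pos n with h0 | h0
    · subst h0; simp
    · have hn : (n : ℝ) ≠ 0 := Nat.cast_ne_zero.mpr h0.ne'
      simp only [Finset.sum_sub_distrib, Finset.sum_const, Finset.card_univ,
        Fintype.card_fin, nsmul_eq_mul, hybar, eMean]
      field_simp
      ring
  set A := fun k => ∑ j ∈ S k, (y j - ybar) with hA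
  have hA0 : ∑ k, A k = 0 := by rw [hA]; rw [hgroup]; exact hsum0
  have hdenpos : ∀ k, (0:ℝ) < (n:ℝ) - (S k).card := by
    intro k
    have h := hcard k
    have h' : ((S k).card : ℝ) < n := by exact_mod_cast h
    linarith
  have hne : ∀ k, ((n:ℝ) - (S k).card) ≠ 0 := fun k => (hdenpos k).ne'
  have hsumy : ∀ k : Fin K, ∑ j ∈ (S k)ᶜ, y j = ((n:ℝ) - (S k).card) * ybar - A k := by
    intro k
    have hn0 : 0 < n := lt_of_le_of_lt (Nat.zero_le _) (hcard k)
    have hn : (n : ℝ) ≠ 0 := Nat.cast_ne_zero.mpr hn0.ne'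
    have h1 : ∑ j ∈ (S k)ᶜ, y j = (∑ j, y j) - ∑ j ∈ S k, y j := by
      rw [eq_sub_iff_add_eq]; exact Finset.sum_compl_add_sum _ _
    have h2 : ∑ j ∈ S k, y j = A k + (S k).card * ybar := by
      rw [hA]
      simp only [Finset.sum_sub_distrib, Finset.sum_const, nsmul_eq_mul]
      ring
    have h3 : (∑ j, y j) = n * ybar := by
      rw [hybar, eMean]; field_simp
    rw [h1, h2, h3]; ring
  have key : (∑ j, (y j - ybar) * (z j - eMean z)) =
      -(∑ k : Fin K, (A k)^2 / ((n:ℝ) - (S k).card)) := by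
    have e1 : (∑ j, (y j - ybar) * (z j - eMean z))
        = ∑ j, (y j - ybar) * z j := by
      simp only [mul_sub]
      rw [Finset.sum_sub_distrib, ← Finset.sum_mul, hsum0]
      ring
    rw [e1, ← hgroup (fun j => (y j - ybar) * z j)]
    have e2 : ∀ k, ∑ j ∈ S k, (y j - ybar) * z j
        = A k * ybar - (A k)^2 / ((n:ℝ) - (S k).card) := by
      intro k
      have h4 : ∑ j ∈ S k, (y j - ybar) * z j
          = ∑ j ∈ S k, (y j - ybar) * ((∑ j ∈ (S k)ᶜ, y j) / ((n:ℝ) - (S k).card)) := by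
        refine Finset.sum_congr rfl fun j hj => ?_
        rw [hz k j hj]
      rw [h4, ← Finset.sum_mul, hsumy k]
      have hAk : (∑ j ∈ S k, (y j - ybar)) = A k := rfl
      rw [hAk]
      have hd := hne k
      field_simp
    rw [Finset.sum_congr rfl (fun k _ => e2 k), Finset.sum_sub_distrib,
      ← Finset.sum_mul, hA0]
    ring
  refine ⟨key, ?_, ?_⟩
  · rw [key]
    apply neg_nonpos.mpr
    exact Finset.sum_nonneg fun k _ => div_nonneg (sq_nonneg _) (hdenpos k).le
  · rw [key, neg_eq_zero]
    constructor
    · intro h k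
      have h5 := (Finset.sum_eq_zero_iff_of_nonneg
        (fun k _ => div_nonneg (sq_nonneg _) (hdenpos k).le)).mp h k (Finset.mem_univ k)
      rcases div_eq_zero_iff.mp h5 with h1 | h1
      · exact pow_eq_zero_iff (by norm_num) |>.mp h1
      · exact absurd h1 (hne k)
    · intro h
      apply Finset.sum_eq_zero
      intro k _
      rw [show A k = 0 from h k]; simp
end

section
/- Let y ∈ ℝ^n (n ≥ 3) have positive empirical variance, let z¹ be the leave-one-out cross-validated predictor of the intercept-only model, z¹_i = (1/(n−1)) Σ_{j ≠ i} y_j, and let z² ∈ ℝ^n have positive empirical variance with Pearson correlation satisfying 0 < ρ(y, z²) < 1. Consider the least-squares regression of y on an intercept together with z¹ and z², i.e. the minimizers (β̂₀, β̂₁, β̂₂) of Σ_{i=1}^n (y_i − β₀ − β₁ z¹_i − β₂ z²_i)². Then the least-squares coefficient of z¹ equals β̂₁ = 1 − n. -/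
open Finset

/-- Regressing `y` by least squares on an intercept, the leave-one-out
cross-validated intercept-only predictor `z¹`, and a second predictor `z²` with
`0 < ρ(y, z²) < 1`, the coefficient of `z¹` equals `1 - n`. -/
theorem stmt_7 {n : ℕ} (hn : 3 ≤ n) (y z1 z2 : Fin n → ℝ)
    (hy : 0 < eVar y) (h2 : 0 < eVar z2)
    (hz1 : ∀ i : Fin n, z1 i = (∑ j ∈ Finset.univ.erase i, y j) / ((n : ℝ) - 1))
    (hc2 : 0 < eCorr y z2) (hc2' : eCorr y z2 < 1)
    (b0 b1 b2 : ℝ)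
    (hmin : ∀ c0 c1 c2 : ℝ,
      ∑ i, (y i - b0 - b1 * z1 i - b2 * z2 i) ^ 2 ≤
        ∑ i, (y i - c0 - c1 * z1 i - c2 * z2 i) ^ 2) :
    b1 = 1 - (n : ℝ) := by
  have hnR : (3:ℝ) ≤ (n:ℝ) := by exact_mod_cast hn
  have hn1 : (0:ℝ) < (n:ℝ) - 1 := by linarith
  have hn1' : (n:ℝ) - 1 ≠ 0 := ne_of_gt hn1
  have hn0 : (n:ℝ) ≠ 0 := by linarith
  set S := ∑ j, y j with hS
  have hz1' : ∀ i, z1 i = (S - y i) / ((n:ℝ) - 1) := by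
    intro i
    rw [hz1 i]
    congr 1
    have := Finset.sum_erase_add Finset.univ y (Finset.mem_univ i)
    linarith
  have hopt : ∑ i, (y i - S - (1 - (n:ℝ)) * z1 i - 0 * z2 i) ^ 2 = 0 := by
    apply Finset.sum_eq_zero
    intro i _
    rw [hz1' i]
    field_simp
    ring
  have hle := hmin S (1 - (n:ℝ)) 0
  rw [hopt] at hle
  have hsum0 : ∑ i, (y i - b0 - b1 * z1 i - b2 * z2 i) ^ 2 = 0 :=
    le_antisymm hle (Finset.sum_nonneg fun i _ => sq_nonneg _)
  have hres : ∀ i, y i - b0 - b1 * z1 i - b2 * z2 i = 0 := by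
    intro i
    have h := (Finset.sum_eq_zero_iff_of_nonneg (fun i _ => sq_nonneg _)).mp hsum0 i
      (Finset.mem_univ i)
    exact pow_eq_zero_iff (two_ne_zero) |>.mp h
  set t := 1 + b1 / ((n:ℝ) - 1) with ht
  set C := b0 + b1 * S / ((n:ℝ) - 1) with hC
  have hkey : ∀ i, t * y i = C + b2 * z2 i := by
    intro i
    have h := hres i
    rw [hz1' i] at h
    rw [ht, hC]
    field_simp at h ⊢
    linarith
  by_cases htz : t = 0
  · have : b1 / ((n:ℝ) - 1) = -1 := by rw [ht] at htz; linarith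
    field_simp at this
    linarith
  · exfalso
    set a := b2 / t with ha
    set d := C / t with hd
    have hy' : ∀ i, y i = d + a * z2 i := by
      intro i
      have h := hkey i
      rw [ha, hd]
      field_simp
      linarith [h]
    have hmean : eMean y = d + a * eMean z2 := by
      unfold eMean
      simp only [hy']
      rw [Finset.sum_add_distrib, ← Finset.mul_sum, Finset.sum_const, Finset.card_univ,
        Fintype.card_fin, nsmul_eq_mul]
      field_simp
    have hdev : ∀ j, y j - eMean y = a * (z2 j - eMean z2) := by
      intro j; rw [hy' j, hmean]; ring
    have hvar : eVar y = a ^ 2 * eVar z2 := by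
      unfold eVar
      simp only [hdev, mul_pow]
      rw [← Finset.mul_sum, mul_div_assoc]
    have ha0 : a ≠ 0 := by
      intro h0
      rw [h0] at hvar
      simp at hvar
      linarith
    have hSDy : eSD y = |a| * eSD z2 := by
      unfold eSD
      rw [hvar, Real.sqrt_mul (sq_nonneg a), Real.sqrt_sq_eq_abs]
    have hsum2 : ∑ j, (z2 j - eMean z2) ^ 2 = ((n:ℝ) - 1) * eVar z2 := by
      unfold eVar; field_simp
    have hSD2sq : eSD z2 * eSD z2 = eVar z2 := Real.mul_self_sqrt h2.le
    have hsd2 : 0 < eSD z2 := Real.sqrt_pos.mpr h2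
    have habs : 0 < |a| := abs_pos.mpr ha0
    have hcorr : eCorr y z2 = a / |a| := by
      unfold eCorr
      simp only [hdev, mul_assoc]
      rw [← Finset.mul_sum]
      have h3 : ∑ j, (z2 j - eMean z2) * (z2 j - eMean z2) = ((n:ℝ) - 1) * eVar z2 := by
        rw [← hsum2]; exact Finset.sum_congr rfl fun j _ => (pow_two _).symm
      rw [h3, hSDy]
      rw [div_eq_div_iff (by positivity) (ne_of_gt habs)]
      linear_combination (-(a * ((n:ℝ) - 1) * |a|)) * hSD2sq
    rcases lt_or_gt_of_ne ha0 with hneg | hpos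
    · rw [hcorr, abs_of_neg hneg] at hc2
      have : a / (-a) = -1 := by field_simp
      rw [this] at hc2; linarith
    · rw [hcorr, abs_of_pos hpos] at hc2'
      rw [div_self (ne_of_gt hpos)] at hc2'
      linarith
end

section
/- Let y ∈ ℝ^n (n ≥ 3) have positive empirical variance, let z¹ be the leave-one-out cross-validated predictor of the intercept-only model, z¹_i = (1/(n−1)) Σ_{j ≠ i} y_j, and let z² ∈ ℝ^n have positive empirical variance with Pearson correlation satisfying 0 < ρ(y, z²) < 1. Consider the least-squares regression of y on an intercept together with z¹ and z², i.e. the minimizers (β̂₀, β̂₁, β̂₂) of Σ_{i=1}^n (y_i − β₀ − β₁ z¹_i − β₂ z²_i)². Then the least-squares coefficient of z² equals β̂₂ = 0. -/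
open Finset

lemma eMean_affine {n : ℕ} (hn : (n : ℝ) ≠ 0) (y : Fin n → ℝ) (a d : ℝ) :
    eMean (fun i => a * y i + d) = a * eMean y + d := by
  unfold eMean
  rw [Finset.sum_add_distrib, ← Finset.mul_sum, Finset.sum_const, Finset.card_univ,
    Fintype.card_fin]
  field_simp
  ring

lemma eVar_affine {n : ℕ} (hn : (n : ℝ) ≠ 0) (y : Fin n → ℝ) (a d : ℝ) :
    eVar (fun i => a * y i + d) = a ^ 2 * eVar y := by
  unfold eVar
  rw [eMean_affine hn]
  have h : ∑ j, ((fun i => a * y i + d) j - (a * eMean y + d)) ^ 2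
      = a ^ 2 * ∑ j, (y j - eMean y) ^ 2 := by
    rw [Finset.mul_sum]
    apply Finset.sum_congr rfl
    intro j _
    simp only []
    ring
  rw [h]
  ring

lemma eCorr_affine {n : ℕ} (hn : (1:ℝ) < n) (y : Fin n → ℝ) (hy : 0 < eVar y)
    (a d : ℝ) (ha : a ≠ 0) :
    eCorr y (fun i => a * y i + d) = a / |a| := by
  have hn0 : (n : ℝ) ≠ 0 := by linarith
  have hn1 : (n : ℝ) - 1 ≠ 0 := by linarith
  have hsd : 0 < eSD y := Real.sqrt_pos.mpr hy
  have hsq : eSD y * eSD y = eVar y := Real.mul_self_sqrt hy.le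
  unfold eCorr
  rw [eMean_affine hn0]
  have hnum : ∑ j, (y j - eMean y) * (a * y j + d - (a * eMean y + d))
      = a * (∑ j, (y j - eMean y) ^ 2) := by
    rw [Finset.mul_sum]
    apply Finset.sum_congr rfl
    intro j _
    ring
  have hsum : (∑ j, (y j - eMean y) ^ 2) = ((n : ℝ) - 1) * eVar y := by
    unfold eVar; field_simp
  have hsd2 : eSD (fun i => a * y i + d) = |a| * eSD y := by
    unfold eSD
    rw [eVar_affine hn0, Real.sqrt_mul (sq_nonneg a), Real.sqrt_sq_eq_abs]
  rw [hnum, hsum, hsd2, ← hsq]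
  have hab : |a| ≠ 0 := abs_ne_zero.mpr ha
  field_simp

/-- Regressing `y` by least squares on an intercept, the leave-one-out
cross-validated intercept-only predictor `z¹`, and a second predictor `z²` with
`0 < ρ(y, z²) < 1`, the coefficient of `z²` equals `0`. -/
theorem stmt_8 {n : ℕ} (hn : 3 ≤ n) (y z1 z2 : Fin n → ℝ)
    (hy : 0 < eVar y) (h2 : 0 < eVar z2)
    (hz1 : ∀ i : Fin n, z1 i = (∑ j ∈ Finset.univ.erase i, y j) / ((n : ℝ) - 1))
    (hc2 : 0 < eCorr y z2) (hc2' : eCorr y z2 < 1)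
    (b0 b1 b2 : ℝ)
    (hmin : ∀ c0 c1 c2 : ℝ,
      ∑ i, (y i - b0 - b1 * z1 i - b2 * z2 i) ^ 2 ≤
        ∑ i, (y i - c0 - c1 * z1 i - c2 * z2 i) ^ 2) :
    b2 = 0 := by
  have hn1 : (1:ℝ) < (n : ℝ) := by
    have : (3:ℝ) ≤ (n : ℝ) := by exact_mod_cast hn
    linarith
  have hn1' : (n : ℝ) - 1 ≠ 0 := by linarith
  set S := ∑ j, y j with hS
  have hz1' : ∀ i, z1 i = (S - y i) / ((n : ℝ) - 1) := by
    intro i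
    rw [hz1 i]
    congr 1
    have : S = (∑ j ∈ Finset.univ.erase i, y j) + y i :=
      (Finset.sum_erase_add _ _ (Finset.mem_univ i)).symm
    linarith
  -- With c0 = S, c1 = -(n-1), c2 = 0, residuals are zero
  have hzero : ∑ i, (y i - S - (-(((n:ℝ) - 1))) * z1 i - 0 * z2 i) ^ 2 = 0 := by
    apply Finset.sum_eq_zero
    intro i _
    rw [hz1' i]
    field_simp
    ring
  have hle := hmin S (-(((n:ℝ) - 1))) 0
  rw [hzero] at hle
  have hres : ∀ i, y i - b0 - b1 * z1 i - b2 * z2 i = 0 := by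
    intro i
    have := Finset.sum_eq_zero_iff_of_nonneg
      (fun j _ => sq_nonneg (y j - b0 - b1 * z1 j - b2 * z2 j)) |>.mp
      (le_antisymm hle (Finset.sum_nonneg fun j _ => sq_nonneg _)) i (Finset.mem_univ i)
    exact pow_eq_zero_iff (n := 2) (by norm_num) |>.mp this
  by_contra hb2
  -- z2 = a * y + d
  set a := (1 + b1 / ((n:ℝ) - 1)) / b2 with ha
  set d := (-b0 - b1 * S / ((n:ℝ) - 1)) / b2 with hd
  have hz2 : ∀ i, z2 i = a * y i + d := by
    intro i
    have h := hres i
    rw [hz1' i] at h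
    rw [ha, hd]
    field_simp
    field_simp at h
    nlinarith [h]
  have hz2f : z2 = fun i => a * y i + d := funext hz2
  by_cases haz : a = 0
  · -- z2 constant, contradicts h2
    have : eVar z2 = 0 := by
      rw [hz2f, eVar_affine (by linarith) y a d, haz]
      ring
    linarith
  · have hcorr : eCorr y z2 = a / |a| := by
      rw [hz2f]; exact eCorr_affine hn1 y hy a d haz
    rcases lt_or_gt_of_ne haz with hneg | hpos
    · rw [hcorr, abs_of_neg hneg] at hc2
      have : a / (-a) = -1 := by field_simp
      rw [this] at hc2; linarith
    · rw [hcorr, abs_of_pos hpos, div_self (ne_of_gt hpos)] at hc2'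
      linarith
end
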